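/- arXiv:2202.06119 — 2 statements merged into one kernel-verified Lean document; each statement's English description precedes it below -/
import Mathlib

section
/- Let $2 < p < \infty$ and $\tfrac{1}{p} + \tfrac{1}{q} = 1$. Define $G : [0,1] \times \mathbb{T} \to \mathbb{C}$ by $G(r,t) = g(t)$, where $g$ is the continuous function on $\mathbb{T}$ with Fourier coefficients $\hat{g}(k) = \frac{e^{i k \log k}}{\sqrt{k}(\log k)^2}$ for $k \ge 2$ and $0$ otherwise. Then $G \in L^p(\mathbb{D})$ but $\|G\|_{p,q} = \infty$, i.e. $G \notin L^p_{\mathrm{rad}}(\ell^q_{\mathrm{ang}})$; hence the inclusion $L^p_{\mathrm{rad}}(\ell^q_{\mathrm{ang}}) \subseteq L^p(\mathbb{D})$ is strict. -/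
open MeasureTheory Set
open scoped ENNReal NNReal

lemma aux_not_summable (q : ℝ) (hq1 : 1 < q) (hq2 : q < 2) :
    ¬ Summable (fun n : ℕ =>
      (1 / (Real.sqrt ((n : ℝ) + 2) * (Real.log ((n : ℝ) + 2)) ^ 2)) ^ q) := by
  have hq0 : 0 < q := lt_trans one_pos hq1
  set ε : ℝ := (1 - q / 2) / (4 * q) with hε
  have hε0 : 0 < ε := div_pos (by linarith) (by linarith)
  set s : ℝ := q / 2 + 2 * q * ε with hs
  have hs1 : s < 1 := by
    have h : 2 * q * ε = (1 - q / 2) / 2 := by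
      rw [hε]; field_simp; ring
    rw [hs, h]; linarith
  have hs0 : 0 < s := by positivity
  intro hsum
  -- key pointwise bound
  have key : ∀ n : ℕ, 1 / ((n : ℝ) + 2) ^ s ≤
      (ε ^ (2 * q))⁻¹ *
        (1 / (Real.sqrt ((n : ℝ) + 2) * (Real.log ((n : ℝ) + 2)) ^ 2)) ^ q := by
    intro n
    set x : ℝ := (n : ℝ) + 2 with hx
    have hx2 : (2 : ℝ) ≤ x := by simp [hx]
    have hx0 : (0 : ℝ) < x := by linarith
    have hlog0 : 0 < Real.log x := Real.log_pos (by linarith)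
    have hu0 : 0 < Real.sqrt x * (Real.log x) ^ 2 := by positivity
    have hεq0 : (0 : ℝ) < ε ^ (2 * q) := Real.rpow_pos_of_pos hε0 _
    -- u^q ≤ x^s / ε^(2q)
    have hlog_le : Real.log x ≤ x ^ ε / ε := Real.log_le_rpow_div hx0.le hε0
    have h1 : (Real.log x) ^ (2 * q : ℝ) ≤ (x ^ ε / ε) ^ (2 * q : ℝ) :=
      Real.rpow_le_rpow hlog0.le hlog_le (by positivity)
    have h2 : (x ^ ε / ε) ^ (2 * q : ℝ) = x ^ (2 * q * ε) / ε ^ (2 * q) := by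
      rw [Real.div_rpow (by positivity) hε0.le, ← Real.rpow_mul hx0.le,
        show ε * (2 * q) = 2 * q * ε by ring]
    have huq : (Real.sqrt x * (Real.log x) ^ 2) ^ q ≤ x ^ s / ε ^ (2 * q) := by
      have e1 : (Real.sqrt x * (Real.log x) ^ 2) ^ q
          = x ^ (q / 2) * (Real.log x) ^ (2 * q : ℝ) := by
        rw [Real.mul_rpow (Real.sqrt_nonneg _) (by positivity),
          Real.sqrt_eq_rpow, ← Real.rpow_natCast (Real.log x) 2,
          ← Real.rpow_mul hx0.le, ← Real.rpow_mul hlog0.le,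
          show (1/2:ℝ) * q = q / 2 by ring]
        norm_num
      rw [e1]
      calc x ^ (q / 2) * (Real.log x) ^ (2 * q : ℝ)
          ≤ x ^ (q / 2) * (x ^ (2 * q * ε) / ε ^ (2 * q)) := by
            refine mul_le_mul_of_nonneg_left ?_ (by positivity)
            rw [← h2]; exact h1
        _ = x ^ s / ε ^ (2 * q) := by
            rw [hs, Real.rpow_add hx0]; ring
    have hpos : 0 < (Real.sqrt x * (Real.log x) ^ 2) ^ q := Real.rpow_pos_of_pos hu0 _
    have h3 : 1 / (x ^ s / ε ^ (2 * q)) ≤ 1 / ((Real.sqrt x * (Real.log x) ^ 2) ^ q) :=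
      one_div_le_one_div_of_le hpos huq
    have h4 : (1 / (Real.sqrt x * (Real.log x) ^ 2)) ^ q
        = 1 / ((Real.sqrt x * (Real.log x) ^ 2) ^ q) := by
      rw [Real.div_rpow (by norm_num) hu0.le, Real.one_rpow]
    rw [h4]
    calc 1 / x ^ s = (ε ^ (2 * q))⁻¹ * (1 / (x ^ s / ε ^ (2 * q))) := by
          field_simp
      _ ≤ (ε ^ (2 * q))⁻¹ * (1 / ((Real.sqrt x * (Real.log x) ^ 2) ^ q)) :=
          mul_le_mul_of_nonneg_left h3 (by positivity)
  -- comparison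
  have hsum2 : Summable (fun n : ℕ => 1 / ((n : ℝ) + 2) ^ s) := by
    refine Summable.of_nonneg_of_le (fun n => by positivity) key ?_
    exact hsum.mul_left _
  have hsum3 : Summable (fun n : ℕ => 1 / (n : ℝ) ^ s) := by
    have := (summable_nat_add_iff (f := fun n : ℕ => 1 / (n : ℝ) ^ s) 2).mp ?_
    · exact this
    · convert hsum2 using 2 with n
      push_cast
      exacts [rfl, by push_cast; ring]
  exact absurd (Real.summable_one_div_nat_rpow.mp hsum3) (by linarith)

/-- With `2 < p < ∞`, `1/p + 1/q = 1`, and `g` the continuous function with Fourier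
coefficients `e^{ik log k}/(√k (log k)²)` for `k ≥ 2` (and `0` otherwise), the function
`G(r,t) = g(t)` on the disc lies in `L^p(𝔻)` but has infinite mixed norm `‖G‖_{p,q}`,
so `G ∉ L^p_rad(ℓ^q_ang)` and the inclusion `L^p_rad(ℓ^q_ang) ⊆ L^p(𝔻)` is strict. -/
theorem radial_extension_in_Lp_not_mixed (p q : ℝ) (hp : 2 < p) (hpq : 1 / p + 1 / q = 1)
    (g : AddCircle (1 : ℝ) → ℂ) (hg : Continuous g)
    (hcoef : ∀ k : ℤ, fourierCoeff g k =
      if 2 ≤ k then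
        Complex.exp (Complex.I * (k : ℂ) * (Real.log (k : ℝ) : ℂ)) /
          ((Real.sqrt (k : ℝ) * (Real.log (k : ℝ)) ^ 2 : ℝ) : ℂ)
      else 0) :
    MemLp (fun x : ℝ × AddCircle (1 : ℝ) => g x.2) (ENNReal.ofReal p)
        (((volume.restrict (Ioc (0 : ℝ) 1)).withDensity
            (fun r => ENNReal.ofReal r)).prod AddCircle.haarAddCircle) ∧
      (∫⁻ r in Ioc (0 : ℝ) 1,
        (∑' m : ℤ, (‖fourierCoeff (fun θ : AddCircle (1 : ℝ) =>
            (fun x : ℝ × AddCircle (1 : ℝ) => g x.2) (r, θ)) m‖₊ : ℝ≥0∞) ^ q) ^ (p / q) *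
          ENNReal.ofReal r) = ∞ := by
  have hp0 : (0 : ℝ) < p := by linarith
  -- bounds on q
  have hq_half : 1 / 2 < 1 / q := by
    have h1 : 1 / p < 1 / 2 := by
      rw [div_lt_div_iff₀ hp0 two_pos]; linarith
    linarith
  have hq_lt_one : 1 / q < 1 := by
    have : 0 < 1 / p := by positivity
    linarith
  have hq0 : 0 < q := one_div_pos.mp (by linarith)
  have hq1 : 1 < q := by
    have h : 1 / q < 1 / 1 := by rw [one_div_one]; exact hq_lt_one
    exact lt_of_one_div_lt_one_div hq0 h
  have hq2 : q < 2 := lt_of_one_div_lt_one_div two_pos hq_half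
  -- finiteness of the radial measure
  haveI hfin : IsFiniteMeasure
      ((volume.restrict (Ioc (0 : ℝ) 1)).withDensity fun r => ENNReal.ofReal r) := by
    constructor
    rw [withDensity_apply _ MeasurableSet.univ, Measure.restrict_univ]
    calc ∫⁻ r, ENNReal.ofReal r ∂(volume.restrict (Ioc (0 : ℝ) 1))
        ≤ ∫⁻ _ in Ioc (0 : ℝ) 1, 1 :=
          setLIntegral_mono measurable_const
            (fun r hr => ENNReal.ofReal_le_one.mpr hr.2)
      _ = volume (Ioc (0 : ℝ) 1) := setLIntegral_one _
      _ < ∞ := by simp [Real.volume_Ioc]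
  constructor
  · -- membership in L^p
    obtain ⟨t₀, -, hmax⟩ := isCompact_univ.exists_isMaxOn univ_nonempty
      (hg.norm.continuousOn)
    exact MemLp.of_bound ((hg.comp continuous_snd).aestronglyMeasurable) ‖g t₀‖
      (ae_of_all _ fun x => hmax (mem_univ x.2))
  · -- infinite mixed norm
    have htsum : (∑' m : ℤ, (‖fourierCoeff g m‖₊ : ℝ≥0∞) ^ q) = ∞ := by
      refine top_unique ?_
      have hinj : Function.Injective (fun n : ℕ => (n : ℤ) + 2) := by
        intro a b h; simpa using h
      refine le_trans ?_ (ENNReal.tsum_comp_le_tsum_of_injective hinj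
        (fun m => (‖fourierCoeff g m‖₊ : ℝ≥0∞) ^ q))
      have hterm : ∀ n : ℕ, (‖fourierCoeff g ((n : ℤ) + 2)‖₊ : ℝ≥0∞) ^ q =
          ENNReal.ofReal
            ((1 / (Real.sqrt ((n : ℝ) + 2) * (Real.log ((n : ℝ) + 2)) ^ 2)) ^ q) := by
        intro n
        have hcast : (((n : ℤ) + 2 : ℤ) : ℝ) = (n : ℝ) + 2 := by push_cast; ring
        have hn0 : (0 : ℝ) ≤ (n : ℝ) := n.cast_nonneg
        have hx2 : (2 : ℝ) ≤ (n : ℝ) + 2 := by linarith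
        have hlog0 : 0 < Real.log ((n : ℝ) + 2) := Real.log_pos (by linarith)
        have hu0 : 0 < Real.sqrt ((n : ℝ) + 2) * (Real.log ((n : ℝ) + 2)) ^ 2 := by
          positivity
        have hnorm : ‖fourierCoeff g ((n : ℤ) + 2)‖ =
            1 / (Real.sqrt ((n : ℝ) + 2) * (Real.log ((n : ℝ) + 2)) ^ 2) := by
          rw [hcoef, if_pos (by omega : (2 : ℤ) ≤ (n : ℤ) + 2), hcast]
          rw [norm_div, Complex.norm_exp]
          have hre : (Complex.I * (((n : ℤ) + 2 : ℤ) : ℂ) *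
              ((Real.log ((n : ℝ) + 2) : ℝ) : ℂ)).re = 0 := by
            simp [Complex.mul_re, Complex.mul_im]
          rw [hre, Real.exp_zero, Complex.norm_real, Real.norm_of_nonneg hu0.le]
        rw [← ENNReal.ofReal_coe_nnreal, coe_nnnorm, hnorm,
          ENNReal.ofReal_rpow_of_pos (by positivity)]
      rw [tsum_congr hterm, top_le_iff]
      by_contra hne
      have hsummable : Summable (fun n : ℕ =>
          ((1 / (Real.sqrt ((n : ℝ) + 2) * (Real.log ((n : ℝ) + 2)) ^ 2)) ^ q
            : ℝ).toNNReal) := by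
        exact ENNReal.tsum_coe_ne_top_iff_summable.mp hne
      have hreal : Summable (fun n : ℕ =>
          (1 / (Real.sqrt ((n : ℝ) + 2) * (Real.log ((n : ℝ) + 2)) ^ 2)) ^ q) := by
        have := NNReal.summable_coe.mpr hsummable
        refine this.congr fun n => ?_
        exact Real.coe_toNNReal _ (by positivity)
      exact aux_not_summable q hq1 hq2 hreal
    have hIoc : volume (Ioc (0 : ℝ) 1) = 1 := by simp [Real.volume_Ioc]
    calc (∫⁻ r in Ioc (0 : ℝ) 1,
        (∑' m : ℤ, (‖fourierCoeff (fun θ : AddCircle (1 : ℝ) =>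
            (fun x : ℝ × AddCircle (1 : ℝ) => g x.2) (r, θ)) m‖₊ : ℝ≥0∞) ^ q) ^ (p / q) *
          ENNReal.ofReal r)
        = ∫⁻ _ in Ioc (0 : ℝ) 1, (⊤ : ℝ≥0∞) := by
          refine setLIntegral_congr_fun measurableSet_Ioc (fun r hr => ?_)
          have hbeta : (fun θ : AddCircle (1 : ℝ) =>
              (fun x : ℝ × AddCircle (1 : ℝ) => g x.2) (r, θ)) = g := rfl
          rw [hbeta, htsum, ENNReal.top_rpow_of_pos (div_pos hp0 hq0),
            ENNReal.top_mul (ENNReal.ofReal_pos.mpr hr.1).ne']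
      _ = ⊤ := by rw [setLIntegral_const, hIoc, mul_one]
end

section
/- Let $\tfrac{4}{3} < p < 4$. The operator $Sf(x) = \int_0^1 \frac{f(t)}{2 - x - t}\, dt$ is bounded on the weighted space $L^p([0,1], x^{1-p/2}\,dx)$: there is a constant $C_p$ such that $\int_0^1 |Sf(x)|^p\, x^{1-p/2}\,dx \le C_p^p \int_0^1 |f(x)|^p\, x^{1-p/2}\,dx$ for all measurable $f : [0,1] \to \mathbb{C}$ with finite right-hand side. -/
open MeasureTheory Set
open scoped ENNReal NNReal


/-- Core kernel estimate. -/
lemma core_kernel_bound {c e : ℝ} (hc0 : 0 < c) (hc1 : c < 1) (he : -1 < e) (he0 : e ≤ 0) :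
    ∀ x ∈ Ioo (0:ℝ) 1,
      ∫⁻ t in Ioc (0:ℝ) 1, ENNReal.ofReal ((2 - x - t)⁻¹ * ((1 - t) ^ (-c) * t ^ e)) ≤
        ENNReal.ofReal ((4 / (1 + e) + 2 / c + 2 / (1 - c)) * ((1 - x) ^ (-c) * x ^ e)) := by
  intro x hx
  obtain ⟨hx0, hx1⟩ := hx
  set F₁ : ℝ → ℝ≥0∞ := fun t => ENNReal.ofReal (4 * t ^ e) with hF₁
  set F₂ : ℝ → ℝ≥0∞ := fun t => ENNReal.ofReal (2 * (1 - t) ^ (-c - 1)) with hF₂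
  set F₃ : ℝ → ℝ≥0∞ := fun t => ENNReal.ofReal (2 * (1 - x)⁻¹ * (1 - t) ^ (-c)) with hF₃
  set S₁ : Set ℝ := Ioc 0 (1/2) with hS₁
  set S₂ : Set ℝ := Ioc (1/2) 1 ∩ Iic x with hS₂
  set S₃ : Set ℝ := Ioc (1/2) 1 ∩ Ioi x with hS₃
  -- pointwise bound
  have hpt : ∀ t ∈ Ioc (0:ℝ) 1,
      ENNReal.ofReal ((2 - x - t)⁻¹ * ((1 - t) ^ (-c) * t ^ e)) ≤
        S₁.indicator F₁ t + S₂.indicator F₂ t + S₃.indicator F₃ t := by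
    intro t ht
    have ht0 : 0 < t := ht.1
    have ht1 : t ≤ 1 := ht.2
    have hte : (0:ℝ) ≤ t ^ e := Real.rpow_nonneg ht0.le e
    rcases le_or_gt t (1/2) with h1 | h1
    · have hmem : t ∈ S₁ := ⟨ht0, h1⟩
      have hbound : (2 - x - t)⁻¹ * ((1 - t) ^ (-c) * t ^ e) ≤ 4 * t ^ e := by
        have hden : (1:ℝ)/2 ≤ 2 - x - t := by linarith
        have hinv : (2 - x - t)⁻¹ ≤ 2 := by
          have := inv_anti₀ (by norm_num : (0:ℝ) < 1/2) hden
          norm_num at this; linarith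
        have hr : (1 - t) ^ (-c) ≤ 2 := by
          have h2 : (0:ℝ) < 1/2 := by norm_num
          have := Real.rpow_le_rpow_of_nonpos h2 (by linarith : (1:ℝ)/2 ≤ 1 - t) (by linarith : -c ≤ 0)
          calc (1 - t) ^ (-c) ≤ ((1:ℝ)/2) ^ (-c) := this
            _ = 2 ^ c := by
                rw [show (1:ℝ)/2 = 2⁻¹ by norm_num, Real.inv_rpow (by norm_num),
                  Real.rpow_neg (by norm_num), inv_inv]
            _ ≤ 2 ^ (1:ℝ) := Real.rpow_le_rpow_of_exponent_le (by norm_num) hc1.le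
            _ = 2 := Real.rpow_one 2
        calc (2 - x - t)⁻¹ * ((1 - t) ^ (-c) * t ^ e)
            ≤ 2 * (2 * t ^ e) := by
              apply mul_le_mul hinv (mul_le_mul_of_nonneg_right hr hte)
                (mul_nonneg (Real.rpow_nonneg (by linarith) _) hte) (by norm_num)
          _ = 4 * t ^ e := by ring
      calc ENNReal.ofReal ((2 - x - t)⁻¹ * ((1 - t) ^ (-c) * t ^ e))
          ≤ S₁.indicator F₁ t := by
            rw [indicator_of_mem hmem]; exact ENNReal.ofReal_le_ofReal hbound
        _ ≤ _ := le_add_of_le_of_nonneg (le_add_of_le_of_nonneg le_rfl zero_le) zero_le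
    · have hthalf : (0:ℝ) < t := ht0
      have hte2 : t ^ e ≤ 2 := by
        have h2 : (0:ℝ) < 1/2 := by norm_num
        calc t ^ e ≤ ((1:ℝ)/2) ^ e := Real.rpow_le_rpow_of_nonpos h2 h1.le he0
          _ = 2 ^ (-e) := by
              rw [show (1:ℝ)/2 = 2⁻¹ by norm_num, Real.inv_rpow (by norm_num),
                ← Real.rpow_neg (by norm_num)]
          _ ≤ 2 ^ (1:ℝ) := Real.rpow_le_rpow_of_exponent_le (by norm_num) (by linarith)
          _ = 2 := Real.rpow_one 2
      rcases le_or_gt t x with h2 | h2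
      · have hmem : t ∈ S₂ := ⟨⟨h1, ht1⟩, h2⟩
        have ht1' : t < 1 := lt_of_le_of_lt h2 hx1
        have h1t : (0:ℝ) < 1 - t := by linarith
        have hbound : (2 - x - t)⁻¹ * ((1 - t) ^ (-c) * t ^ e) ≤ 2 * (1 - t) ^ (-c - 1) := by
          have hden : (1:ℝ) - t ≤ 2 - x - t := by linarith
          have hinv : (2 - x - t)⁻¹ ≤ (1 - t)⁻¹ := inv_anti₀ h1t hden
          have hrc : (0:ℝ) ≤ (1 - t) ^ (-c) := Real.rpow_nonneg h1t.le _
          calc (2 - x - t)⁻¹ * ((1 - t) ^ (-c) * t ^ e)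
              ≤ (1 - t)⁻¹ * ((1 - t) ^ (-c) * 2) := by
                apply mul_le_mul hinv (mul_le_mul_of_nonneg_left hte2 hrc)
                  (mul_nonneg hrc hte) (by positivity)
            _ = 2 * (1 - t) ^ (-c - 1) := by
                have hcomb : (1 - t)⁻¹ * (1 - t) ^ (-c) = (1 - t) ^ (-c - 1) := by
                  rw [← Real.rpow_neg_one (1 - t), ← Real.rpow_add h1t]
                  ring_nf
                rw [← hcomb]; ring
        calc ENNReal.ofReal ((2 - x - t)⁻¹ * ((1 - t) ^ (-c) * t ^ e))
            ≤ S₂.indicator F₂ t := by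
              rw [indicator_of_mem hmem]; exact ENNReal.ofReal_le_ofReal hbound
          _ ≤ _ := le_add_of_le_of_nonneg (le_add_of_nonneg_of_le zero_le le_rfl) zero_le
      · have hmem : t ∈ S₃ := ⟨⟨h1, ht1⟩, h2⟩
        have h1x : (0:ℝ) < 1 - x := by linarith
        have hbound : (2 - x - t)⁻¹ * ((1 - t) ^ (-c) * t ^ e) ≤ 2 * (1 - x)⁻¹ * (1 - t) ^ (-c) := by
          have hden : (1:ℝ) - x ≤ 2 - x - t := by linarith
          have hinv : (2 - x - t)⁻¹ ≤ (1 - x)⁻¹ := inv_anti₀ h1x hden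
          have h1t : (0:ℝ) ≤ 1 - t := by linarith
          have hrc : (0:ℝ) ≤ (1 - t) ^ (-c) := Real.rpow_nonneg h1t _
          calc (2 - x - t)⁻¹ * ((1 - t) ^ (-c) * t ^ e)
              ≤ (1 - x)⁻¹ * ((1 - t) ^ (-c) * 2) := by
                apply mul_le_mul hinv (mul_le_mul_of_nonneg_left hte2 hrc)
                  (mul_nonneg hrc hte) (by positivity)
            _ = 2 * (1 - x)⁻¹ * (1 - t) ^ (-c) := by ring
        calc ENNReal.ofReal ((2 - x - t)⁻¹ * ((1 - t) ^ (-c) * t ^ e))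
            ≤ S₃.indicator F₃ t := by
              rw [indicator_of_mem hmem]; exact ENNReal.ofReal_le_ofReal hbound
          _ ≤ _ := le_add_of_nonneg_of_le zero_le le_rfl
  -- measurability
  have hmF₁ : Measurable F₁ := by
    apply Measurable.ennreal_ofReal; fun_prop
  have hmF₂ : Measurable F₂ := by
    apply Measurable.ennreal_ofReal; fun_prop
  have hmF₃ : Measurable F₃ := by
    apply Measurable.ennreal_ofReal; fun_prop
  have hS₁m : MeasurableSet S₁ := measurableSet_Ioc
  have hS₂m : MeasurableSet S₂ := measurableSet_Ioc.inter measurableSet_Iic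
  have hS₃m : MeasurableSet S₃ := measurableSet_Ioc.inter measurableSet_Ioi
  have h1x : (0:ℝ) < 1 - x := by linarith
  have hstep : (∫⁻ t in Ioc (0:ℝ) 1, ENNReal.ofReal ((2 - x - t)⁻¹ * ((1 - t) ^ (-c) * t ^ e))) ≤
      (∫⁻ t in Ioc (0:ℝ) (1/2), F₁ t) + (∫⁻ t in Ioc (1/2) x, F₂ t) + (∫⁻ t in Ioc x 1, F₃ t) := by
    have h1 : (∫⁻ t in Ioc (0:ℝ) 1, ENNReal.ofReal ((2 - x - t)⁻¹ * ((1 - t) ^ (-c) * t ^ e))) ≤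
        ∫⁻ t in Ioc (0:ℝ) 1, (S₁.indicator F₁ t + S₂.indicator F₂ t + S₃.indicator F₃ t) :=
      lintegral_mono_ae ((ae_restrict_iff' measurableSet_Ioc).2 (ae_of_all _ hpt))
    refine h1.trans ?_
    rw [lintegral_add_right _ (hmF₃.indicator hS₃m), lintegral_add_right _ (hmF₂.indicator hS₂m),
      lintegral_indicator hS₁m, lintegral_indicator hS₂m, lintegral_indicator hS₃m,
      Measure.restrict_restrict hS₁m, Measure.restrict_restrict hS₂m,
      Measure.restrict_restrict hS₃m]
    gcongr
    · exact inter_subset_left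
    · exact (fun t ht => ⟨ht.1.1.1, ht.1.2⟩)
    · exact (fun t ht => ⟨ht.1.2, ht.1.1.2⟩)
  have hB1 : (∫⁻ t in Ioc (0:ℝ) (1/2), F₁ t) ≤ ENNReal.ofReal (4 / (1 + e)) := by
    have hint : IntervalIntegrable (fun t : ℝ => t ^ e) volume 0 (1/2) :=
      intervalIntegral.intervalIntegrable_rpow' he
    have hII : IntegrableOn (fun t : ℝ => 4 * t ^ e) (Ioc (0:ℝ) (1/2)) := by
      have := (intervalIntegrable_iff_integrableOn_Ioc_of_le (by norm_num : (0:ℝ) ≤ 1/2)).1 hint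
      exact this.const_mul 4
    have hnn : 0 ≤ᵐ[volume.restrict (Ioc (0:ℝ) (1/2))] fun t : ℝ => 4 * t ^ e :=
      (ae_restrict_iff' measurableSet_Ioc).2 (ae_of_all _ fun t ht => by
        have := Real.rpow_nonneg ht.1.le e; positivity)
    rw [hF₁]
    rw [← MeasureTheory.ofReal_integral_eq_lintegral_ofReal hII hnn]
    apply ENNReal.ofReal_le_ofReal
    have hcv : (∫ t in Ioc (0:ℝ) (1/2), 4 * t ^ e) = ∫ t in (0:ℝ)..(1/2), 4 * t ^ e :=
      (intervalIntegral.integral_of_le (by norm_num)).symm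
    rw [hcv, intervalIntegral.integral_const_mul, integral_rpow (Or.inl he),
      Real.zero_rpow (by linarith : e + 1 ≠ 0)]
    have hle1 : ((1:ℝ)/2) ^ (e+1) ≤ 1 :=
      Real.rpow_le_one (by norm_num) (by norm_num) (by linarith)
    have hep : (0:ℝ) < e + 1 := by linarith
    rw [sub_zero]
    calc 4 * ((1/2:ℝ) ^ (e+1) / (e+1)) ≤ 4 * (1 / (e+1)) := by gcongr
      _ = 4 / (1 + e) := by rw [add_comm]; ring
  have hB2 : (∫⁻ t in Ioc (1/2:ℝ) x, F₂ t) ≤ ENNReal.ofReal (2 / c * (1-x) ^ (-c)) := by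
    rcases le_or_gt x (1/2) with hx2 | hx2
    · rw [Ioc_eq_empty (by exact not_lt.2 hx2), Measure.restrict_empty, lintegral_zero_measure]
      exact zero_le
    · have hcont : ContinuousOn (fun t : ℝ => 2 * (1 - t) ^ (-c - 1)) (Icc (1/2) x) := by
        apply ContinuousOn.mul continuousOn_const
        apply ContinuousOn.rpow_const (by fun_prop)
        intro t ht
        left
        have : t ≤ x := ht.2
        intro h0; nlinarith [h0]
      have hII : IntegrableOn (fun t : ℝ => 2 * (1 - t) ^ (-c - 1)) (Ioc (1/2:ℝ) x) :=
        (hcont.integrableOn_Icc).mono_set Ioc_subset_Icc_self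
      have hnn : 0 ≤ᵐ[volume.restrict (Ioc (1/2:ℝ) x)] fun t : ℝ => 2 * (1 - t) ^ (-c - 1) :=
        (ae_restrict_iff' measurableSet_Ioc).2 (ae_of_all _ fun t ht => by
          have h1t : (0:ℝ) ≤ 1 - t := by
            have := ht.2; linarith
          have := Real.rpow_nonneg h1t (-c - 1); positivity)
      rw [hF₂, ← MeasureTheory.ofReal_integral_eq_lintegral_ofReal hII hnn]
      apply ENNReal.ofReal_le_ofReal
      have hcv : (∫ t in Ioc (1/2:ℝ) x, 2 * (1 - t) ^ (-c-1)) = ∫ t in (1/2:ℝ)..x, 2 * (1 - t) ^ (-c-1) :=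
        (intervalIntegral.integral_of_le hx2.le).symm
      have hsub : (∫ t in (1/2:ℝ)..x, (1 - t) ^ (-c-1)) = ∫ s in (1-x)..(1-(1/2:ℝ)), s ^ (-c-1) :=
        intervalIntegral.integral_comp_sub_left (fun s : ℝ => s ^ (-c-1)) 1
      have hval : (∫ s in (1-x)..(1-(1/2:ℝ)), s ^ (-c-1)) =
          ((1-(1/2:ℝ)) ^ (-c) - (1-x) ^ (-c)) / (-c) := by
        rw [integral_rpow (Or.inr ⟨fun h => hc0.ne' (by linarith),
          notMem_uIcc_of_lt h1x (by norm_num)⟩)]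
        norm_num
      rw [hcv, intervalIntegral.integral_const_mul, hsub, hval]
      have h05 : (0:ℝ) ≤ (1-(1/2:ℝ)) ^ (-c) := Real.rpow_nonneg (by norm_num) _
      have heq : ((1-(1/2:ℝ)) ^ (-c) - (1-x) ^ (-c)) / (-c) =
          ((1-x) ^ (-c) - (1-(1/2:ℝ)) ^ (-c)) / c := by
        rw [div_neg, ← neg_div, neg_sub]
      rw [heq]
      calc 2 * (((1-x) ^ (-c) - (1-(1/2:ℝ)) ^ (-c)) / c)
          = 2 * ((1-x) ^ (-c) - (1-(1/2:ℝ)) ^ (-c)) / c := by ring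
        _ ≤ 2 * (1-x) ^ (-c) / c := by gcongr; linarith
        _ = 2 / c * (1-x) ^ (-c) := by ring
  have hB3 : (∫⁻ t in Ioc x (1:ℝ), F₃ t) ≤ ENNReal.ofReal (2 / (1-c) * (1-x) ^ (-c)) := by
    have hint0 : IntervalIntegrable (fun s : ℝ => s ^ (-c)) volume 0 (1-x) :=
      intervalIntegral.intervalIntegrable_rpow' (by linarith)
    have hint : IntervalIntegrable (fun t : ℝ => (1 - t) ^ (-c)) volume x 1 := by
      have h := (hint0.comp_sub_left 1).symm
      norm_num at h
      convert h using 2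
    have hII : IntegrableOn (fun t : ℝ => 2 * (1-x)⁻¹ * (1 - t) ^ (-c)) (Ioc x (1:ℝ)) :=
      (intervalIntegrable_iff_integrableOn_Ioc_of_le hx1.le).1 (hint.const_mul _)
    have hnn : 0 ≤ᵐ[volume.restrict (Ioc x (1:ℝ))] fun t : ℝ => 2 * (1-x)⁻¹ * (1 - t) ^ (-c) :=
      (ae_restrict_iff' measurableSet_Ioc).2 (ae_of_all _ fun t ht => by
        have h1t : (0:ℝ) ≤ 1 - t := by have := ht.2; linarith
        have := Real.rpow_nonneg h1t (-c)
        have := h1x.le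
        positivity)
    rw [hF₃, ← MeasureTheory.ofReal_integral_eq_lintegral_ofReal hII hnn]
    apply ENNReal.ofReal_le_ofReal
    have hcv : (∫ t in Ioc x (1:ℝ), 2 * (1-x)⁻¹ * (1 - t) ^ (-c)) =
        ∫ t in x..(1:ℝ), 2 * (1-x)⁻¹ * (1 - t) ^ (-c) :=
      (intervalIntegral.integral_of_le hx1.le).symm
    have hsub : (∫ t in x..(1:ℝ), (1 - t) ^ (-c)) = ∫ s in (1-(1:ℝ))..(1-x), s ^ (-c) :=
      intervalIntegral.integral_comp_sub_left (fun s : ℝ => s ^ (-c)) 1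
    have hval : (∫ s in (1-(1:ℝ))..(1-x), s ^ (-c)) = (1-x) ^ (-c+1) / (-c+1) := by
      rw [show (1:ℝ)-1 = 0 by norm_num, integral_rpow (Or.inl (by linarith : (-1:ℝ) < -c)),
        Real.zero_rpow (by intro h; exact (by linarith : c ≠ 1) (by linarith)), sub_zero]
    rw [hcv, intervalIntegral.integral_const_mul, hsub, hval]
    have hcomb : (1-x)⁻¹ * (1-x) ^ (-c+1) = (1-x) ^ (-c) := by
      rw [← Real.rpow_neg_one (1-x), ← Real.rpow_add h1x]
      ring_nf
    have heq2 : 2 * (1-x)⁻¹ * ((1-x) ^ (-c+1) / (-c+1)) = 2 / (1-c) * (1-x) ^ (-c) := by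
      rw [show (-c+1 : ℝ) = 1 - c by ring, ← hcomb]; ring
    exact le_of_eq heq2
  -- combine
  refine hstep.trans ?_
  refine le_trans (add_le_add (add_le_add hB1 hB2) hB3) ?_
  have hP1 : (1:ℝ) ≤ (1-x) ^ (-c) :=
    Real.one_le_rpow_of_pos_of_le_one_of_nonpos h1x (by linarith) (by linarith)
  have hQ1 : (1:ℝ) ≤ x ^ e :=
    Real.one_le_rpow_of_pos_of_le_one_of_nonpos hx0 hx1.le he0
  have ha : (0:ℝ) < 4 / (1+e) := div_pos (by norm_num) (by linarith)
  have hb : (0:ℝ) < 2 / c := div_pos (by norm_num) hc0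
  have hd : (0:ℝ) < 2 / (1-c) := div_pos (by norm_num) (by linarith)
  have hP0 : (0:ℝ) ≤ (1-x) ^ (-c) := by linarith
  rw [← ENNReal.ofReal_add ha.le (mul_nonneg hb.le hP0),
    ← ENNReal.ofReal_add (add_nonneg ha.le (mul_nonneg hb.le hP0)) (mul_nonneg hd.le hP0)]
  apply ENNReal.ofReal_le_ofReal
  have hPQ : (1-x) ^ (-c) ≤ (1-x) ^ (-c) * (x ^ e) := le_mul_of_one_le_right hP0 hQ1
  have h1PQ : (1:ℝ) ≤ (1-x) ^ (-c) * (x ^ e) := hP1.trans hPQ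
  nlinarith [mul_le_mul_of_nonneg_left h1PQ ha.le, mul_le_mul_of_nonneg_left hPQ hb.le,
    mul_le_mul_of_nonneg_left hPQ hd.le]



lemma schur_bound {μ : Measure ℝ} [SFinite μ] {p q : ℝ} (hpq : p.HolderConjugate q)
    {k : ℝ → ℝ → ℝ≥0∞} (hk : Measurable (Function.uncurry k))
    {w h g : ℝ → ℝ≥0∞} (hw : Measurable w) (hh : Measurable h) (hg : Measurable g)
    {A B : ℝ≥0∞}
    (hpos : ∀ᵐ x ∂μ, h x ≠ 0 ∧ h x ≠ ⊤)
    (hA : ∀ᵐ x ∂μ, (∫⁻ t, k x t * h t ^ q ∂μ) ≤ A * h x ^ q)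
    (hB : ∀ᵐ t ∂μ, (∫⁻ x, k x t * h x ^ p * w x ∂μ) ≤ B * (h t ^ p * w t)) :
    ∫⁻ x, (∫⁻ t, g t * k x t ∂μ) ^ p * w x ∂μ ≤
      A ^ (p - 1) * B * ∫⁻ t, g t ^ p * w t ∂μ := by
  have hp1 : 1 < p := hpq.lt
  have hp0 : 0 < p := lt_trans one_pos hp1
  have hq0 : 0 < q := hpq.symm.pos
  have hkx : ∀ x, Measurable (k x) := fun x => hk.comp measurable_prodMk_left
  have hkt : ∀ t, Measurable (fun x => k x t) :=
    fun t => hk.comp (measurable_id.prodMk measurable_const)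
  set X : ℝ → ℝ≥0∞ := fun x => ∫⁻ t, g t ^ p * k x t * (h t)⁻¹ ^ p ∂μ with hXdef
  have huncurry : Measurable (Function.uncurry fun x t => g t ^ p * k x t * (h t)⁻¹ ^ p) := by
    apply Measurable.mul
    · apply Measurable.mul
      · exact (hg.comp measurable_snd).pow_const p
      · exact hk
    · exact ((hh.comp measurable_snd).inv).pow_const p
  have hXmeas : Measurable X := Measurable.lintegral_prod_right huncurry
  -- Step 1: pointwise Hölder bound
  have step1 : ∀ᵐ x ∂μ, (∫⁻ t, g t * k x t ∂μ) ^ p ≤ A ^ (p - 1) * h x ^ p * X x := by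
    filter_upwards [hA] with x hAx
    have hsplit : (∫⁻ t, g t * k x t ∂μ) =
        ∫⁻ t, (g t * k x t ^ (1/p) * (h t)⁻¹) * (k x t ^ (1/q) * h t) ∂μ := by
      apply lintegral_congr_ae
      filter_upwards [hpos] with t ht
      have h1 : k x t ^ (1/p) * k x t ^ (1/q) = k x t := by
        rw [← ENNReal.rpow_add_of_nonneg _ _ hpq.one_div_nonneg hpq.symm.one_div_nonneg,
          show (1/p + 1/q : ℝ) = 1 by rw [one_div, one_div, hpq.inv_add_inv_eq_one],
          ENNReal.rpow_one]
      have h2 : (h t)⁻¹ * h t = 1 := ENNReal.inv_mul_cancel ht.1 ht.2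
      calc g t * k x t = g t * (k x t ^ (1/p) * k x t ^ (1/q)) * ((h t)⁻¹ * h t) := by
            rw [h1, h2, mul_one]
        _ = (g t * k x t ^ (1/p) * (h t)⁻¹) * (k x t ^ (1/q) * h t) := by ring
    have hf1 : Measurable fun t => g t * k x t ^ (1/p) * (h t)⁻¹ :=
      ((hg.mul ((hkx x).pow_const _)).mul hh.inv)
    have hf2 : Measurable fun t => k x t ^ (1/q) * h t := ((hkx x).pow_const _).mul hh
    have hholder := ENNReal.lintegral_mul_le_Lp_mul_Lq μ hpq hf1.aemeasurable hf2.aemeasurable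
    have hid1 : (∫⁻ t, (fun t => g t * k x t ^ (1/p) * (h t)⁻¹) t ^ p ∂μ) = X x := by
      apply lintegral_congr
      intro t
      rw [ENNReal.mul_rpow_of_nonneg _ _ hp0.le, ENNReal.mul_rpow_of_nonneg _ _ hp0.le,
        ← ENNReal.rpow_mul, one_div_mul_cancel hp0.ne', ENNReal.rpow_one]
    have hid2 : (∫⁻ t, (fun t => k x t ^ (1/q) * h t) t ^ q ∂μ) = ∫⁻ t, k x t * h t ^ q ∂μ := by
      apply lintegral_congr
      intro t
      rw [ENNReal.mul_rpow_of_nonneg _ _ hq0.le, ← ENNReal.rpow_mul,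
        one_div_mul_cancel hq0.ne', ENNReal.rpow_one]
    rw [hsplit]
    calc (∫⁻ t, (g t * k x t ^ (1/p) * (h t)⁻¹) * (k x t ^ (1/q) * h t) ∂μ) ^ p
        ≤ ((X x) ^ (1/p) * (∫⁻ t, k x t * h t ^ q ∂μ) ^ (1/q)) ^ p := by
          apply ENNReal.rpow_le_rpow _ hp0.le
          calc (∫⁻ t, (g t * k x t ^ (1/p) * (h t)⁻¹) * (k x t ^ (1/q) * h t) ∂μ)
              ≤ (∫⁻ t, (fun t => g t * k x t ^ (1/p) * (h t)⁻¹) t ^ p ∂μ) ^ (1/p) *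
                (∫⁻ t, (fun t => k x t ^ (1/q) * h t) t ^ q ∂μ) ^ (1/q) := hholder
            _ = (X x) ^ (1/p) * (∫⁻ t, k x t * h t ^ q ∂μ) ^ (1/q) := by rw [hid1, hid2]
      _ ≤ ((X x) ^ (1/p) * (A * h x ^ q) ^ (1/q)) ^ p := by
          apply ENNReal.rpow_le_rpow _ hp0.le
          exact mul_le_mul_right (ENNReal.rpow_le_rpow hAx hpq.symm.one_div_nonneg) _
      _ = A ^ (p - 1) * h x ^ p * X x := by
          rw [ENNReal.mul_rpow_of_nonneg _ _ hp0.le, ← ENNReal.rpow_mul,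
            one_div_mul_cancel hp0.ne', ENNReal.rpow_one, ← ENNReal.rpow_mul,
            ENNReal.mul_rpow_of_nonneg _ _ (by positivity : (0:ℝ) ≤ 1/q * p),
            ← ENNReal.rpow_mul]
          have e1 : 1/q * p = p - 1 := by
            have := hpq.div_conj_eq_sub_one
            field_simp
            linarith [hpq.sub_one_mul_conj]
          have e2 : q * (1/q * p) = p := by
            field_simp
          rw [e1]
          rw [show q * (p - 1) = p by rw [← e1]; field_simp]
          ring
  -- Step 2: integrate
  calc ∫⁻ x, (∫⁻ t, g t * k x t ∂μ) ^ p * w x ∂μ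
      ≤ ∫⁻ x, A ^ (p - 1) * (h x ^ p * w x * X x) ∂μ := by
        apply lintegral_mono_ae
        filter_upwards [step1] with x hx
        calc (∫⁻ t, g t * k x t ∂μ) ^ p * w x ≤ (A ^ (p-1) * h x ^ p * X x) * w x :=
              mul_le_mul_left hx _
          _ = A ^ (p - 1) * (h x ^ p * w x * X x) := by ring
    _ = A ^ (p - 1) * ∫⁻ x, h x ^ p * w x * X x ∂μ := by
        rw [lintegral_const_mul _ (by exact (((hh.pow_const p).mul hw).mul hXmeas : Measurable fun x => h x ^ p * w x * X x))]
    _ ≤ A ^ (p - 1) * (B * ∫⁻ t, g t ^ p * w t ∂μ) := by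
        apply mul_le_mul_right
        have hswap : (∫⁻ x, h x ^ p * w x * X x ∂μ) =
            ∫⁻ t, ∫⁻ x, (g t ^ p * (h t)⁻¹ ^ p) * (k x t * h x ^ p * w x) ∂μ ∂μ := by
          rw [← lintegral_lintegral_swap]
          · apply lintegral_congr
            intro x
            have hmt : Measurable fun t => g t ^ p * k x t * (h t)⁻¹ ^ p :=
              ((hg.pow_const p).mul (hkx x)).mul (hh.inv.pow_const p)
            calc h x ^ p * w x * X x
                = ∫⁻ t, (h x ^ p * w x) * (g t ^ p * k x t * (h t)⁻¹ ^ p) ∂μ :=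
                  (lintegral_const_mul _ hmt).symm
              _ = ∫⁻ t, (g t ^ p * (h t)⁻¹ ^ p) * (k x t * h x ^ p * w x) ∂μ :=
                  lintegral_congr fun t => by ring
          · apply Measurable.aemeasurable
            apply Measurable.mul
            · exact ((hg.comp measurable_snd).pow_const p).mul
                (((hh.comp measurable_snd).inv).pow_const p)
            · exact (hk.mul ((hh.comp measurable_fst).pow_const p)).mul
                (hw.comp measurable_fst)
        rw [hswap]
        have hbd : ∀ᵐ t ∂μ, (∫⁻ x, (g t ^ p * (h t)⁻¹ ^ p) * (k x t * h x ^ p * w x) ∂μ) ≤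
            B * (g t ^ p * w t) := by
          filter_upwards [hB, hpos] with t hBt ht
          rw [lintegral_const_mul _ (by exact (((hkt t).mul (hh.pow_const p)).mul hw : Measurable fun x => k x t * h x ^ p * w x))]
          calc (g t ^ p * (h t)⁻¹ ^ p) * (∫⁻ x, k x t * h x ^ p * w x ∂μ)
              ≤ (g t ^ p * (h t)⁻¹ ^ p) * (B * (h t ^ p * w t)) := mul_le_mul_right hBt _
            _ = B * (g t ^ p * w t) * ((h t)⁻¹ ^ p * h t ^ p) := by ring
            _ = B * (g t ^ p * w t) := by
                rw [← ENNReal.mul_rpow_of_nonneg _ _ hp0.le,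
                  ENNReal.inv_mul_cancel ht.1 ht.2, ENNReal.one_rpow, mul_one]
        calc (∫⁻ t, ∫⁻ x, (g t ^ p * (h t)⁻¹ ^ p) * (k x t * h x ^ p * w x) ∂μ ∂μ)
            ≤ ∫⁻ t, B * (g t ^ p * w t) ∂μ := lintegral_mono_ae hbd
          _ = B * ∫⁻ t, g t ^ p * w t ∂μ := lintegral_const_mul _ ((hg.pow_const p).mul hw)
    _ = A ^ (p - 1) * B * ∫⁻ t, g t ^ p * w t ∂μ := by rw [mul_assoc]



section helpers

lemma h_pow_eq {γ δ r : ℝ} (hr : 0 ≤ r) {x : ℝ} (hx0 : 0 ≤ x) (hx1 : x ≤ 1) :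
    (ENNReal.ofReal ((1 - x) ^ (-γ) * x ^ (-δ))) ^ r =
      ENNReal.ofReal ((1 - x) ^ (-(γ * r)) * x ^ (-(δ * r))) := by
  have h1x : (0:ℝ) ≤ 1 - x := by linarith
  rw [ENNReal.ofReal_rpow_of_nonneg
    (mul_nonneg (Real.rpow_nonneg h1x _) (Real.rpow_nonneg hx0 _)) hr]
  congr 1
  rw [Real.mul_rpow (Real.rpow_nonneg h1x _) (Real.rpow_nonneg hx0 _),
    ← Real.rpow_mul h1x, ← Real.rpow_mul hx0, neg_mul, neg_mul]

lemma hw_pow_eq {γ δ α r : ℝ} (hr : 0 ≤ r) {x : ℝ} (hx0 : 0 < x) (hx1 : x ≤ 1) :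
    (ENNReal.ofReal ((1 - x) ^ (-γ) * x ^ (-δ))) ^ r * ENNReal.ofReal (x ^ α) =
      ENNReal.ofReal ((1 - x) ^ (-(γ * r)) * x ^ (-(δ * r) + α)) := by
  have h1x : (0:ℝ) ≤ 1 - x := by linarith
  rw [h_pow_eq hr hx0.le hx1,
    ← ENNReal.ofReal_mul (mul_nonneg (Real.rpow_nonneg h1x _) (Real.rpow_nonneg hx0.le _))]
  congr 1
  rw [mul_assoc, ← Real.rpow_add hx0]

end helpers

/-- For `4/3 < p < 4`, the operator `Sf(x) = ∫₀¹ f(t)/(2-x-t) dt` is bounded on the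
weighted space `L^p([0,1], x^{1-p/2} dx)`. -/
theorem reflected_operator_weighted_bound (p : ℝ) (hp1 : 4 / 3 < p) (hp2 : p < 4) :
    ∃ C : ℝ, 0 < C ∧ ∀ f : ℝ → ℂ, Measurable f →
      (∫⁻ x in Ioc (0 : ℝ) 1,
          (‖f x‖₊ : ℝ≥0∞) ^ p * ENNReal.ofReal (x ^ (1 - p / 2))) < ⊤ →
      (∫⁻ x in Ioc (0 : ℝ) 1,
          (‖∫ t in Ioc (0 : ℝ) 1, f t / ((2 : ℂ) - (x : ℂ) - (t : ℂ))‖₊ : ℝ≥0∞) ^ p *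
            ENNReal.ofReal (x ^ (1 - p / 2))) ≤
        ENNReal.ofReal (C ^ p) *
          ∫⁻ x in Ioc (0 : ℝ) 1,
            (‖f x‖₊ : ℝ≥0∞) ^ p * ENNReal.ofReal (x ^ (1 - p / 2)) := by
  have hp1' : 1 < p := by linarith
  have hp0 : 0 < p := by linarith
  set q : ℝ := p / (p - 1) with hqdef
  have hpq : p.HolderConjugate q := by
    refine Real.holderConjugate_iff.2 ⟨hp1', ?_⟩
    rw [hqdef, inv_div]
    field_simp
    ring
  have hq1 : 1 < q := hpq.symm.lt
  have hq0 : 0 < q := by linarith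
  have hqp : (p - 1) * q = p := hpq.sub_one_mul_conj
  set α : ℝ := 1 - p / 2 with hαdef
  have hα1 : -1 < α := by rw [hαdef]; linarith
  have hαlt : α < p - 1 := by rw [hαdef]; linarith
  set γ : ℝ := 1 / (p + q) with hγdef
  have hγ0 : 0 < γ := by rw [hγdef]; positivity
  set δ : ℝ := max α 0 / p with hδdef
  have hδ0 : 0 ≤ δ := by
    rw [hδdef]; exact div_nonneg (le_max_right _ _) hp0.le
  have hmax : max α 0 < p - 1 := max_lt hαlt (by linarith)
  -- exponents for condition (i)
  have hc₁0 : 0 < γ * q := by positivity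
  have hc₁1 : γ * q < 1 := by
    rw [hγdef, one_div, inv_mul_eq_div, div_lt_one (by linarith)]
    linarith
  have hd₁1 : δ * q < 1 := by
    rw [hδdef, div_mul_eq_mul_div, div_lt_one hp0, ← hqp]
    calc max α 0 * q < (p - 1) * q := by
          exact mul_lt_mul_of_pos_right hmax hq0
      _ = (p-1) * q := rfl
  have he₁1 : -1 < -(δ * q) := by linarith
  have he₁0 : -(δ * q) ≤ 0 := by
    have : 0 ≤ δ * q := by positivity
    linarith
  -- exponents for condition (ii)
  have hc₂0 : 0 < γ * p := by positivity
  have hc₂1 : γ * p < 1 := by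
    rw [hγdef, one_div, inv_mul_eq_div, div_lt_one (by linarith)]
    linarith
  have hδp : δ * p = max α 0 := div_mul_cancel₀ _ hp0.ne'
  have he₂1 : -1 < -(δ * p) + α := by
    rw [hδp]
    rcases le_or_gt α 0 with h | h
    · rw [max_eq_right h]; linarith
    · rw [max_eq_left h.le]; linarith
  have he₂0 : -(δ * p) + α ≤ 0 := by
    rw [hδp]
    have := le_max_left α 0
    linarith
  -- the functions
  set w : ℝ → ℝ≥0∞ := fun x => ENNReal.ofReal (x ^ α) with hwdef
  set hfun : ℝ → ℝ≥0∞ := fun x => ENNReal.ofReal ((1 - x) ^ (-γ) * x ^ (-δ)) with hhdef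
  set k : ℝ → ℝ → ℝ≥0∞ := fun x t => ENNReal.ofReal ((2 - x - t)⁻¹) with hkdef
  set μ : Measure ℝ := volume.restrict (Ioc (0:ℝ) 1) with hμdef
  -- the constants
  have h1e₁ : (0:ℝ) < 1 + -(δ * q) := by linarith
  have h1e₂ : (0:ℝ) < 1 + (-(δ * p) + α) := by linarith
  set A₁ : ℝ := 4 / (1 + -(δ * q)) + 2 / (γ * q) + 2 / (1 - γ * q) with hA₁def
  set A₂ : ℝ := 4 / (1 + (-(δ * p) + α)) + 2 / (γ * p) + 2 / (1 - γ * p) with hA₂def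
  have hA₁pos : 0 < A₁ := by
    rw [hA₁def]
    have := div_pos (by norm_num : (0:ℝ) < 4) h1e₁
    have := div_pos (by norm_num : (0:ℝ) < 2) hc₁0
    have := div_pos (by norm_num : (0:ℝ) < 2) (by linarith : (0:ℝ) < 1 - γ * q)
    linarith
  have hA₂pos : 0 < A₂ := by
    rw [hA₂def]
    have := div_pos (by norm_num : (0:ℝ) < 4) h1e₂
    have := div_pos (by norm_num : (0:ℝ) < 2) hc₂0
    have := div_pos (by norm_num : (0:ℝ) < 2) (by linarith : (0:ℝ) < 1 - γ * p)
    linarith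
  set C : ℝ := (A₁ ^ (p - 1) * A₂) ^ (1/p) with hCdef
  have hCpos : 0 < C := by
    rw [hCdef]
    exact Real.rpow_pos_of_pos (mul_pos (Real.rpow_pos_of_pos hA₁pos _) hA₂pos) _
  refine ⟨C, hCpos, ?_⟩
  intro f hf _
  -- a.e. membership in the open interval
  have hae : ∀ᵐ x ∂μ, x ∈ Ioo (0:ℝ) 1 := by
    have h1 : ∀ᵐ x ∂μ, x ∈ Ioc (0:ℝ) 1 := ae_restrict_mem measurableSet_Ioc
    have h2 : ∀ᵐ x ∂μ, x ≠ 1 := by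
      rw [Filter.eventually_iff, mem_ae_iff]
      have hset : {x : ℝ | x ≠ 1}ᶜ = {1} := by ext y; simp
      rw [hset, hμdef, Measure.restrict_apply (measurableSet_singleton 1)]
      exact measure_mono_null inter_subset_left Real.volume_singleton
    filter_upwards [h1, h2] with x hx hne
    exact ⟨hx.1, lt_of_le_of_ne hx.2 hne⟩
  -- measurability
  have hwme : Measurable w := (measurable_id.pow_const α).ennreal_ofReal
  have hhme : Measurable hfun :=
    (((measurable_const.sub measurable_id).pow_const _).mul
      (measurable_id.pow_const _)).ennreal_ofReal
  have hkme : Measurable (Function.uncurry k) :=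
    (((measurable_const.sub measurable_fst).sub measurable_snd).inv).ennreal_ofReal
  have hgme : Measurable (fun t : ℝ => (‖f t‖₊ : ℝ≥0∞)) := hf.enorm
  -- positivity of hfun
  have hpos : ∀ᵐ x ∂μ, hfun x ≠ 0 ∧ hfun x ≠ ⊤ := by
    filter_upwards [hae] with x hx
    constructor
    · refine (ENNReal.ofReal_pos.2 ?_).ne'
      exact mul_pos (Real.rpow_pos_of_pos (by linarith [hx.2] : (0:ℝ) < 1 - x) _)
        (Real.rpow_pos_of_pos hx.1 _)
    · exact ENNReal.ofReal_ne_top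
  -- condition (i)
  have hAcond : ∀ᵐ x ∂μ, (∫⁻ t, k x t * hfun t ^ q ∂μ) ≤ ENNReal.ofReal A₁ * hfun x ^ q := by
    filter_upwards [hae] with x hx
    have hcore := core_kernel_bound hc₁0 hc₁1 he₁1 he₁0 x hx
    calc (∫⁻ t, k x t * hfun t ^ q ∂μ)
        = ∫⁻ t in Ioc (0:ℝ) 1,
            ENNReal.ofReal ((2 - x - t)⁻¹ * ((1 - t) ^ (-(γ*q)) * t ^ (-(δ*q)))) := by
          rw [hμdef]
          apply lintegral_congr_ae
          filter_upwards [ae_restrict_mem measurableSet_Ioc] with t ht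
          have hden : (0:ℝ) ≤ 2 - x - t := by linarith [hx.2, ht.2]
          rw [hhdef, hkdef]
          simp only
          rw [h_pow_eq hq0.le ht.1.le ht.2, ← ENNReal.ofReal_mul (inv_nonneg.2 hden)]
      _ ≤ ENNReal.ofReal (A₁ * ((1 - x) ^ (-(γ*q)) * x ^ (-(δ*q)))) := hcore
      _ = ENNReal.ofReal A₁ * hfun x ^ q := by
          rw [ENNReal.ofReal_mul hA₁pos.le, hhdef]
          simp only
          rw [h_pow_eq hq0.le hx.1.le hx.2.le]
  -- condition (ii)
  have hBcond : ∀ᵐ t ∂μ, (∫⁻ x, k x t * hfun x ^ p * w x ∂μ) ≤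
      ENNReal.ofReal A₂ * (hfun t ^ p * w t) := by
    filter_upwards [hae] with t ht
    have hcore := core_kernel_bound hc₂0 hc₂1 he₂1 he₂0 t ht
    calc (∫⁻ x, k x t * hfun x ^ p * w x ∂μ)
        = ∫⁻ x in Ioc (0:ℝ) 1,
            ENNReal.ofReal ((2 - t - x)⁻¹ * ((1 - x) ^ (-(γ*p)) * x ^ (-(δ*p) + α))) := by
          rw [hμdef]
          apply lintegral_congr_ae
          filter_upwards [ae_restrict_mem measurableSet_Ioc] with x hx
          have hden : (0:ℝ) ≤ 2 - t - x := by linarith [ht.2, hx.2]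
          rw [hhdef, hkdef, hwdef]
          simp only
          rw [mul_assoc, hw_pow_eq hp0.le hx.1 hx.2,
            show (2 - x - t : ℝ) = 2 - t - x by ring,
            ← ENNReal.ofReal_mul (inv_nonneg.2 hden)]
      _ ≤ ENNReal.ofReal (A₂ * ((1 - t) ^ (-(γ*p)) * t ^ (-(δ*p) + α))) := hcore
      _ = ENNReal.ofReal A₂ * (hfun t ^ p * w t) := by
          rw [ENNReal.ofReal_mul hA₂pos.le, hhdef, hwdef]
          simp only
          rw [hw_pow_eq hp0.le ht.1 ht.2.le]
  have hschur := schur_bound hpq hkme hwme hhme hgme hpos hAcond hBcond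
  calc (∫⁻ x, (‖∫ t in Ioc (0 : ℝ) 1, f t / ((2 : ℂ) - (x : ℂ) - (t : ℂ))‖₊ : ℝ≥0∞) ^ p *
          w x ∂μ)
      ≤ ∫⁻ x, (∫⁻ t, (‖f t‖₊ : ℝ≥0∞) * k x t ∂μ) ^ p * w x ∂μ := by
        apply lintegral_mono_ae
        filter_upwards [hae] with x hx
        apply mul_le_mul_left
        apply ENNReal.rpow_le_rpow _ hp0.le
        calc (‖∫ t in Ioc (0 : ℝ) 1, f t / ((2 : ℂ) - (x : ℂ) - (t : ℂ))‖₊ : ℝ≥0∞)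
            ≤ ∫⁻ t in Ioc (0:ℝ) 1, (‖f t / ((2 : ℂ) - (x : ℂ) - (t : ℂ))‖₊ : ℝ≥0∞) :=
              enorm_integral_le_lintegral_enorm _
          _ = ∫⁻ t, (‖f t‖₊ : ℝ≥0∞) * k x t ∂μ := by
              rw [hμdef]
              apply lintegral_congr_ae
              filter_upwards [ae_restrict_mem measurableSet_Ioc] with t ht
              have hden : (0:ℝ) ≤ 2 - x - t := by linarith [hx.2, ht.2]
              have hcast : ((2:ℂ) - (x:ℂ) - (t:ℂ)) = ((2 - x - t : ℝ) : ℂ) := by push_cast; ring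
              rw [hcast, hkdef]
              simp only
              rw [← enorm_eq_nnnorm, ← ofReal_norm, norm_div, Complex.norm_real,
                Real.norm_of_nonneg hden, div_eq_mul_inv,
                ENNReal.ofReal_mul (norm_nonneg _), ofReal_norm, enorm_eq_nnnorm]
    _ ≤ ENNReal.ofReal A₁ ^ (p - 1) * ENNReal.ofReal A₂ *
          ∫⁻ t, (‖f t‖₊ : ℝ≥0∞) ^ p * w t ∂μ := hschur
    _ = ENNReal.ofReal (C ^ p) * ∫⁻ x, (‖f x‖₊ : ℝ≥0∞) ^ p * w x ∂μ := by
        congr 1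
        have hCp : C ^ p = A₁ ^ (p - 1) * A₂ := by
          rw [hCdef, ← Real.rpow_mul (mul_nonneg (Real.rpow_nonneg hA₁pos.le _) hA₂pos.le),
            one_div_mul_cancel hp0.ne', Real.rpow_one]
        rw [hCp, ENNReal.ofReal_mul (Real.rpow_nonneg hA₁pos.le _),
          ENNReal.ofReal_rpow_of_pos hA₁pos]
end
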